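/- For a prime p and m ≥ 0, let C_m = {a ∈ Z_p : δ^m a = 0} be the zero set of the m-th iterate of the Fermat quotient operator. Then the reduction map C_m → Z_p/p^m Z_p is bijective; in particular C_m has exactly p^m elements. -/

import Mathlib

open PadicInt Polynomial Finset

section Aux

variable {p : ℕ} [Fact p.Prime]

private lemma aux_p_ne_zero : (p : ℤ_[p]) ≠ 0 :=
  Nat.cast_ne_zero.mpr (Fact.out : p.Prime).ne_zero

private lemma aux_isUnit_one_sub {t : ℤ_[p]} (ht : ‖t‖ < 1) : IsUnit (1 - t) := by
  rw [PadicInt.isUnit_iff, sub_eq_add_neg]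
  rw [PadicInt.norm_add_eq_max_of_ne (by rw [norm_one, norm_neg]; exact ne_of_gt ht),
    norm_one, norm_neg]
  exact max_eq_left (le_of_lt ht)

private lemma aux_norm_p_lt_one : ‖(p : ℤ_[p])‖ < 1 := by
  rw [PadicInt.norm_p]
  have h1 : (1 : ℝ) < (p : ℝ) := by exact_mod_cast (Fact.out : p.Prime).one_lt
  exact inv_lt_one_of_one_lt₀ h1

private lemma aux_toZModPow_eq_iff (n : ℕ) (a b : ℤ_[p]) :
    PadicInt.toZModPow n a = PadicInt.toZModPow n b ↔ (p : ℤ_[p]) ^ n ∣ a - b := by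
  rw [← sub_eq_zero, ← map_sub, ← RingHom.mem_ker, PadicInt.ker_toZModPow,
    Ideal.mem_span_singleton]

/-- The key identity: if `p ∣ a - b` then `p * (δ a - δ b) = (a - b) * u` for a unit `u`. -/
private lemma aux_key (δ : ℤ_[p] → ℤ_[p]) (hδ : ∀ x : ℤ_[p], (p : ℤ_[p]) * δ x = x - x ^ p)
    {a b : ℤ_[p]} (hab : (p : ℤ_[p]) ∣ a - b) :
    ∃ u : ℤ_[p], IsUnit u ∧ (p : ℤ_[p]) * (δ a - δ b) = (a - b) * u := by
  set S : ℤ_[p] := ∑ i ∈ Finset.range p, a ^ i * b ^ (p - 1 - i) with hS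
  have hgeom : S * (a - b) = a ^ p - b ^ p := geom_sum₂_mul a b p
  have hpS : (p : ℤ_[p]) ∣ S := by
    have h1 : (p : ℤ_[p]) ∣ S - ∑ _i ∈ Finset.range p, b ^ (p - 1) := by
      rw [← Finset.sum_sub_distrib]
      apply Finset.dvd_sum
      intro i hi
      have hi' : i ≤ p - 1 := Nat.le_sub_one_of_lt (Finset.mem_range.mp hi)
      have : b ^ (p - 1) = b ^ i * b ^ (p - 1 - i) := by
        rw [← pow_add, Nat.add_sub_cancel' hi']
      rw [this, ← sub_mul]
      exact Dvd.dvd.mul_right (dvd_trans hab (sub_dvd_pow_sub_pow a b i)) _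
    have h2 : (p : ℤ_[p]) ∣ ∑ _i ∈ Finset.range p, b ^ (p - 1) := by
      rw [Finset.sum_const, Finset.card_range, nsmul_eq_mul]
      exact Dvd.intro _ rfl
    have := dvd_add h1 h2
    rwa [sub_add_cancel] at this
  refine ⟨1 - S, aux_isUnit_one_sub ((PadicInt.norm_lt_one_iff_dvd S).mpr hpS), ?_⟩
  have : (p : ℤ_[p]) * (δ a - δ b) = (a - a ^ p) - (b - b ^ p) := by
    rw [mul_sub, hδ, hδ]
  rw [this]
  linear_combination hgeom

/-- Combined induction: injectivity and surjectivity of reduction on the zero set. -/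
private lemma aux_main (δ : ℤ_[p] → ℤ_[p]) (hδ : ∀ x : ℤ_[p], (p : ℤ_[p]) * δ x = x - x ^ p)
    (m : ℕ) :
    (∀ a b : ℤ_[p], δ^[m] a = 0 → δ^[m] b = 0 →
        PadicInt.toZModPow m a = PadicInt.toZModPow m b → a = b) ∧
      (∀ c : ZMod (p ^ m), ∃ a : ℤ_[p], δ^[m] a = 0 ∧ PadicInt.toZModPow m a = c) := by
  have hp : (p : ℤ_[p]) ≠ 0 := aux_p_ne_zero
  induction m with
  | zero =>
    constructor
    · intro a b ha hb _
      simpa using ha.trans hb.symm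
    · intro c
      refine ⟨0, by simp, ?_⟩
      have : Subsingleton (ZMod (p ^ 0)) := by rw [pow_zero]; infer_instance
      exact Subsingleton.elim _ _
  | succ m ih =>
    obtain ⟨ih_inj, ih_surj⟩ := ih
    constructor
    · -- injectivity
      intro a b ha hb hab
      rw [aux_toZModPow_eq_iff] at hab
      have habp : (p : ℤ_[p]) ∣ a - b :=
        dvd_trans (dvd_pow_self _ (Nat.succ_ne_zero m)) hab
      obtain ⟨u, hu, hkey⟩ := aux_key δ hδ habp
      -- δ a ≡ δ b mod p^m
      obtain ⟨c, hc⟩ := hab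
      have hpm : (p : ℤ_[p]) ^ m ∣ δ a - δ b := by
        refine ⟨c * u, ?_⟩
        apply mul_left_cancel₀ hp
        rw [hkey, hc, pow_succ]
        ring
      have hδab : δ a = δ b := by
        apply ih_inj <;>
          first
            | (rw [← Function.iterate_succ_apply]; assumption)
            | exact (aux_toZModPow_eq_iff m _ _).mpr hpm
      have : (a - b) * u = 0 := by
        rw [← hkey, hδab, sub_self, mul_zero]
      have := (hu.mul_left_eq_zero).mp this
      exact sub_eq_zero.mp this
    · -- surjectivity
      intro c
      have hpn : NeZero (p ^ (m + 1)) :=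
        ⟨pow_ne_zero _ (Fact.out : p.Prime).ne_zero⟩
      set x : ℤ_[p] := (c.val : ℤ_[p]) with hx
      have hxc : PadicInt.toZModPow (m + 1) x = c := by
        rw [hx, map_natCast, ZMod.natCast_zmod_val]
      obtain ⟨b, hb0, hbc⟩ := ih_surj (PadicInt.toZModPow m (δ x))
      have hbdvd : (p : ℤ_[p]) ^ m ∣ b - δ x := (aux_toZModPow_eq_iff m _ _).mp hbc
      -- Hensel's lemma for F = X - X^p - C (p * b) at x
      set F : Polynomial ℤ_[p] := X - X ^ p - C ((p : ℤ_[p]) * b) with hF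
      have hFeval : ∀ y : ℤ_[p], F.eval y = (p : ℤ_[p]) * (δ y - b) := by
        intro y
        simp only [hF, eval_sub, eval_X, eval_pow, eval_C]
        rw [mul_sub, hδ]
      have hFder : F.derivative = 1 - C (p : ℤ_[p]) * X ^ (p - 1) := by
        simp [hF, derivative_X_pow]
      have hFderx : F.derivative.eval x = 1 - (p : ℤ_[p]) * x ^ (p - 1) := by
        rw [hFder]; simp
      have hderu : ‖F.derivative.eval x‖ = 1 := by
        rw [hFderx]
        refine PadicInt.isUnit_iff.mp (aux_isUnit_one_sub ?_)
        calc ‖(p : ℤ_[p]) * x ^ (p - 1)‖ ≤ ‖(p : ℤ_[p])‖ * 1 := by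
              rw [norm_mul]; gcongr; exact PadicInt.norm_le_one _
          _ < 1 := by rw [mul_one]; exact aux_norm_p_lt_one
      have hnorm : ‖F.eval x‖ < ‖F.derivative.eval x‖ ^ 2 := by
        rw [hderu, one_pow, hFeval]
        calc ‖(p : ℤ_[p]) * (δ x - b)‖ ≤ ‖(p : ℤ_[p])‖ * 1 := by
              rw [norm_mul]; gcongr; exact PadicInt.norm_le_one _
          _ < 1 := by rw [mul_one]; exact aux_norm_p_lt_one
      obtain ⟨z, hz0, hzx, -, -⟩ := hensels_lemma hnorm
      simp only [Polynomial.coe_aeval_eq_eval] at hzx hz0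
      rw [hderu] at hzx
      have hδz : δ z = b := by
        have h2 : (p : ℤ_[p]) * (δ z - b) = 0 := by rw [← hFeval z, hz0]
        exact sub_eq_zero.mp ((mul_eq_zero.mp h2).resolve_left hp)
      have hzx_p : (p : ℤ_[p]) ∣ z - x := (PadicInt.norm_lt_one_iff_dvd _).mp hzx
      obtain ⟨u, hu, hkey⟩ := aux_key δ hδ hzx_p
      have hdvd : (p : ℤ_[p]) ^ (m + 1) ∣ z - x := by
        have h1 : (p : ℤ_[p]) ^ (m + 1) ∣ (z - x) * u := by
          rw [← hkey, hδz, pow_succ, mul_comm ((p : ℤ_[p]) ^ m)]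
          exact mul_dvd_mul_left _ hbdvd
        exact (hu.dvd_mul_right).mp h1
      refine ⟨z, ?_, ?_⟩
      · rw [Function.iterate_succ_apply, hδz, hb0]
      · rw [← hxc]
        exact (aux_toZModPow_eq_iff (m + 1) z x).mpr hdvd

end Aux

/-- The set `C_m = {a ∈ ℤ_[p] : δ^m a = 0}` maps bijectively onto
`ℤ_[p]/p^m ℤ_[p] ≃ ZMod (p^m)` under reduction; in particular it has exactly
`p^m` elements. -/
theorem zero_set_of_delta_iterate_bijects (p : ℕ) [Fact p.Prime]
    (δ : ℤ_[p] → ℤ_[p]) (hδ : ∀ x : ℤ_[p], (p : ℤ_[p]) * δ x = x - x ^ p)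
    (m : ℕ) :
    Function.Bijective
        (fun x : {a : ℤ_[p] // δ^[m] a = 0} => PadicInt.toZModPow m x.val) ∧
      Nat.card {a : ℤ_[p] // δ^[m] a = 0} = p ^ m := by
  obtain ⟨hinj, hsurj⟩ := aux_main δ hδ m
  have hbij : Function.Bijective
      (fun x : {a : ℤ_[p] // δ^[m] a = 0} => PadicInt.toZModPow m x.val) := by
    constructor
    · rintro ⟨a, ha⟩ ⟨b, hb⟩ h
      exact Subtype.ext (hinj a b ha hb h)
    · intro c
      obtain ⟨a, ha, hac⟩ := hsurj c
      exact ⟨⟨a, ha⟩, hac⟩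
  refine ⟨hbij, ?_⟩
  rw [Nat.card_eq_of_bijective _ hbij, Nat.card_zmod]
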